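/- In the group ⟨a, b | a² = 1, b³ = 1⟩ (≅ PSL(2,Z)), the element ab has infinite order. -/

import Mathlib

/-- Relations `a² = 1`, `b³ = 1` presenting `PSL(2,ℤ) ≅ ℤ/2 * ℤ/3`. -/
def modRels : Set (FreeGroup (Fin 2)) :=
  {FreeGroup.of 0 ^ 2, FreeGroup.of 1 ^ 3}

namespace AbAux

abbrev SL := Matrix.SpecialLinearGroup (Fin 2) ℤ

def A : SL := ⟨!![0, -1; 1, 0], by norm_num [Matrix.det_fin_two_of]⟩
def B : SL := ⟨!![0, -1; 1, -1], by norm_num [Matrix.det_fin_two_of]⟩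

lemma A_sq : A * A = -1 := by
  ext i j
  rw [Matrix.SpecialLinearGroup.coe_mul]
  fin_cases i <;> fin_cases j <;>
    simp [A, Matrix.SpecialLinearGroup.coe_mul, Matrix.mul_fin_two]

lemma B_cube : B * B * B = 1 := by
  ext i j
  rw [Matrix.SpecialLinearGroup.coe_mul, Matrix.SpecialLinearGroup.coe_mul]
  fin_cases i <;> fin_cases j <;>
    simp [B, Matrix.SpecialLinearGroup.coe_mul, Matrix.mul_fin_two]

lemma AB_pow (k : ℕ) :
    (((A * B) ^ k : SL) : Matrix (Fin 2) (Fin 2) ℤ) =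
      !![(-1 : ℤ) ^ k, (-1) ^ k * (-(k : ℤ)); 0, (-1) ^ k] := by
  induction k with
  | zero => simp [Matrix.one_fin_two]
  | succ n ih =>
      rw [pow_succ, Matrix.SpecialLinearGroup.coe_mul, ih]
      have : ((A * B : SL) : Matrix (Fin 2) (Fin 2) ℤ) = !![-1, 1; 0, -1] := by
        ext i j
        rw [Matrix.SpecialLinearGroup.coe_mul]
        fin_cases i <;> fin_cases j <;>
          simp [A, B, Matrix.SpecialLinearGroup.coe_mul, Matrix.mul_fin_two]
      rw [this, Matrix.mul_fin_two]
      ext i j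
      fin_cases i <;> fin_cases j <;> simp <;> ring

def N : Subgroup SL := Subgroup.zpowers (-1)

lemma neg_one_sq' : (-1 : SL) * (-1) = 1 := by
  ext i j
  fin_cases i <;> fin_cases j <;>
    simp [Matrix.SpecialLinearGroup.coe_mul, Matrix.mul_fin_two, Matrix.one_fin_two]

lemma neg_one_zpow' (n : ℤ) : (-1 : SL) ^ n = 1 ∨ (-1 : SL) ^ n = -1 := by
  have h2 : (-1 : SL) ^ (2 : ℤ) = 1 := by
    rw [show (2:ℤ) = 1 + 1 by norm_num, zpow_add, zpow_one, neg_one_sq']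
  rcases Int.even_or_odd' n with ⟨m, rfl | rfl⟩
  · left; rw [zpow_mul, h2, one_zpow]
  · right; rw [zpow_add, zpow_mul, h2, one_zpow, one_mul, zpow_one]

instance : N.Normal := ⟨by
  intro x hx g
  rcases Subgroup.mem_zpowers_iff.mp hx with ⟨n, rfl⟩
  rcases neg_one_zpow' n with h | h <;> rw [h]
  · simpa using Subgroup.one_mem N
  · have : (g * -1 * g⁻¹ : SL) = -1 := by simp [mul_neg, neg_mul]
    rw [this]; exact Subgroup.mem_zpowers _⟩

def G := SL ⧸ N

noncomputable instance : Group G := inferInstanceAs (Group (SL ⧸ N))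

end AbAux

open AbAux in
/-- In `⟨a, b | a² = 1, b³ = 1⟩` the element `ab` has infinite order. -/
theorem ab_infinite_order :
    ∀ k : ℕ, 0 < k →
      (PresentedGroup.of 0 * PresentedGroup.of 1 : PresentedGroup modRels) ^ k ≠ 1 := by
  classical
  set f : Fin 2 → AbAux.G := ![QuotientGroup.mk A, QuotientGroup.mk B] with hf
  have hrel : ∀ r ∈ modRels, FreeGroup.lift f r = 1 := by
    intro r hr
    rcases hr with h | h
    · subst h
      simp only [map_pow, FreeGroup.lift_apply_of, hf]
      show (QuotientGroup.mk (A ^ 2) : SL ⧸ N) = 1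
      rw [QuotientGroup.eq_one_iff]
      have : A ^ 2 = -1 := by rw [pow_two, A_sq]
      rw [this]
      exact Subgroup.mem_zpowers _
    · simp only [Set.mem_singleton_iff] at h
      subst h
      simp only [map_pow, FreeGroup.lift_apply_of, hf]
      show (QuotientGroup.mk (B ^ 3) : SL ⧸ N) = 1
      rw [QuotientGroup.eq_one_iff]
      have : B ^ 3 = 1 := by rw [pow_succ, pow_two, B_cube]
      rw [this]
      exact Subgroup.one_mem _
  intro k hk hcontra
  have := congrArg (PresentedGroup.toGroup hrel) hcontra
  rw [map_pow, map_one, map_mul, PresentedGroup.toGroup.of, PresentedGroup.toGroup.of] at this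
  have hAB : f 0 * f 1 = QuotientGroup.mk (A * B) := by simp [hf]; rfl
  rw [hAB] at this
  change (QuotientGroup.mk (A * B) : SL ⧸ N) ^ k = 1 at this
  rw [ ← QuotientGroup.mk_pow, QuotientGroup.eq_one_iff] at this
  rcases Subgroup.mem_zpowers_iff.mp this with ⟨n, hn⟩
  have hcase : (A * B) ^ k = 1 ∨ (A * B) ^ k = -1 := by
    rcases neg_one_zpow' n with h | h
    · left; rw [← hn, h]
    · right; rw [← hn, h]
  have hmat : (((A * B) ^ k : SL) : Matrix (Fin 2) (Fin 2) ℤ) 0 1 = 0 := by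
    rcases hcase with h | h <;> rw [h] <;> simp [Matrix.one_fin_two]
  rw [AB_pow k] at hmat
  simp at hmat
  omega
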